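/- Let F be a field, let k ≥ 1 be an integer with (k : F) ≠ 0, and let ζ ∈ F be a primitive k-th root of unity. Let A(x) be a polynomial over F with natDegree at most n, and let s be an integer with 2s ≤ n and n − s + 1 ≤ k ≤ n. Then for every integer j with s ≤ j ≤ n − s, the coefficient of x^j in A(x) equals (k : F)⁻¹ · Σ_{t=0}^{k−1} A(ζ^t) · (ζ^{t·j})⁻¹. -/

import Mathlib

open Polynomial Finset

/-- Lemma 1: recovering middle coefficients of a degree-`n` polynomial from its
evaluations on the `k`-th roots of unity via the closed-form inverse DFT,
when `n - s + 1 ≤ k ≤ n` and `2s ≤ n`. -/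
theorem stmt_1 {F : Type*} [Field F] (k : ℕ) (hk : 1 ≤ k) (hkF : (k : F) ≠ 0)
    (ζ : F) (hζ : IsPrimitiveRoot ζ k)
    (A : F[X]) (n s : ℕ) (hA : A.natDegree ≤ n)
    (hs : 2 * s ≤ n) (hk₁ : n - s + 1 ≤ k) (hk₂ : k ≤ n)
    (j : ℕ) (hj₁ : s ≤ j) (hj₂ : j ≤ n - s) :
    A.coeff j = (k : F)⁻¹ * ∑ t ∈ range k, A.eval (ζ ^ t) * (ζ ^ (t * j))⁻¹ := by
  have hζ0 : ζ ≠ 0 := by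
    intro h
    have := hζ.pow_eq_one
    rw [h, zero_pow (by omega : k ≠ 0)] at this
    exact zero_ne_one this
  have heval : ∀ t : ℕ, A.eval (ζ ^ t) = ∑ i ∈ range (n + 1), A.coeff i * (ζ ^ t) ^ i := by
    intro t
    exact Polynomial.eval_eq_sum_range' (by omega) _
  -- key orthogonality sum
  have key : ∀ i ∈ range (n + 1),
      ∑ t ∈ range k, (ζ ^ i * (ζ ^ j)⁻¹) ^ t = if i = j then (k : F) else 0 := by
    intro i hi
    rw [mem_range] at hi
    by_cases hij : i = j
    · subst hij
      simp [mul_inv_cancel₀ (pow_ne_zero i hζ0)]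
    · rw [if_neg hij]
      set w : F := ζ ^ i * (ζ ^ j)⁻¹ with hw
      have hwk : w ^ k = 1 := by
        rw [hw, mul_pow, inv_pow, ← pow_mul, ← pow_mul, mul_comm i k, mul_comm j k,
          pow_mul, pow_mul, hζ.pow_eq_one, one_pow, one_pow, inv_one, mul_one]
      have hw1 : w ≠ 1 := by
        intro h1
        have hij' : ζ ^ i = ζ ^ j := by
          field_simp [hw] at h1
          rw [hw] at h1; exact (mul_inv_eq_one₀ (pow_ne_zero j hζ0)).mp h1
        rcases le_total i j with hle | hle
        · have : ζ ^ j = ζ ^ i * ζ ^ (j - i) := by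
            rw [← pow_add]; congr 1; omega
          have h2 : ζ ^ (j - i) = 1 := by
            rw [hij'] at this
            exact (mul_left_cancel₀ (pow_ne_zero j hζ0) (by rw [← this, mul_one])).symm
          have := hζ.pow_eq_one_iff_dvd (j - i) |>.mp h2
          have : j - i = 0 := by
            rcases Nat.eq_zero_or_pos (j - i) with h0 | hpos
            · exact h0
            · exact absurd (Nat.le_of_dvd hpos this) (by omega)
          omega
        · have : ζ ^ i = ζ ^ j * ζ ^ (i - j) := by
            rw [← pow_add]; congr 1; omega
          have h2 : ζ ^ (i - j) = 1 := by
            rw [hij'] at this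
            exact (mul_left_cancel₀ (pow_ne_zero j hζ0) (by rw [← this, mul_one])).symm
          have := hζ.pow_eq_one_iff_dvd (i - j) |>.mp h2
          have : i - j = 0 := by
            rcases Nat.eq_zero_or_pos (i - j) with h0 | hpos
            · exact h0
            · exact absurd (Nat.le_of_dvd hpos this) (by omega)
          omega
      rw [geom_sum_eq hw1, hwk, sub_self, zero_div]
  have hsum : ∑ t ∈ range k, A.eval (ζ ^ t) * (ζ ^ (t * j))⁻¹
      = ∑ i ∈ range (n + 1), A.coeff i * ∑ t ∈ range k, (ζ ^ i * (ζ ^ j)⁻¹) ^ t := by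
    simp_rw [heval, Finset.sum_mul, Finset.mul_sum]
    rw [Finset.sum_comm]
    congr 1
    ext i
    congr 1
    ext t
    rw [mul_pow, inv_pow, ← pow_mul, ← pow_mul, mul_comm i t]
    rw [← pow_mul ζ j t, mul_comm j t, mul_assoc]
  rw [hsum, Finset.sum_congr rfl (fun i hi => by rw [key i hi])]
  simp_rw [mul_ite, mul_zero]
  rw [Finset.sum_ite_eq' (range (n + 1)) j (fun i => A.coeff i * (k : F))]
  rw [if_pos (mem_range.mpr (by omega)), mul_comm (A.coeff j), ← mul_assoc,
    inv_mul_cancel₀ hkF, one_mul]
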